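/- Let f, g, h be entire functions satisfying conditions (F), (G), (H) respectively. Then the composite h∘g∘f satisfies: |(h∘g∘f)(z) - 2| < 1/2 for all z ∈ E_0; |(h∘g∘f)(z) + 14| < 1/2 for all z ∈ G_k for every k >= 1; and |(h∘g∘f)(z) + (4k+14)| < 1/2 for all z ∈ B_k for every k >= 1. -/

import Mathlib

open Complex Metric

noncomputable section

/-- `Gset k` is the set `G_k` for `k ≥ 1`. -/
def Gset (k : ℕ) : Set ℂ :=
  {z | ‖(z - (4*(k:ℂ)+2))‖ ≤ 1} ∪
  {z | z.re = 4*(k:ℝ)+2 ∧ 1 ≤ z.im} ∪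
  {z | z.re = 4*(k:ℝ)+2 ∧ z.im ≤ -1}

/-- `Bset k` is the set `B_k` for `k ≥ 1`. -/
def Bset (k : ℕ) : Set ℂ :=
  {z | ‖(z + (4*(k:ℂ)+2))‖ ≤ 1} ∪
  {z | z.re = -(4*(k:ℝ)+2) ∧ 1 ≤ z.im} ∪
  {z | z.re = -(4*(k:ℝ)+2) ∧ z.im ≤ -1}

/-- `Lset k` is the vertical line `Re z = 4k`. -/
def Lset (k : ℕ) : Set ℂ := {z | z.re = 4*(k:ℝ)}

/-- `Mset k` is the vertical line `Re z = -4k`. -/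
def Mset (k : ℕ) : Set ℂ := {z | z.re = -(4*(k:ℝ))}

/-- `G0` is the closed disk `|z - 2| ≤ 1`. -/
def G0 : Set ℂ := {z | ‖(z - 2)‖ ≤ 1}

/-- `E0 = G_0 ∪ ⋃_{k ≥ 1} (L_k ∪ M_k)`. -/
def E0 : Set ℂ := G0 ∪ ⋃ k ∈ Set.Ici 1, (Lset k ∪ Mset k)

/-- Condition (F). -/
def CondF (f : ℂ → ℂ) : Prop :=
  (∀ z ∈ E0, ‖(f z - 2)‖ < 1/2) ∧
  (∀ k : ℕ, 1 ≤ k → ∀ z ∈ Gset k, ‖(f z + 6)‖ < 1/2) ∧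
  (∀ k : ℕ, 1 ≤ k → ∀ z ∈ Bset k, ‖(f z + (4*(k:ℂ)+6))‖ < 1/2)

/-- Condition (G). -/
def CondG (g : ℂ → ℂ) : Prop :=
  (∀ z ∈ E0, ‖(g z - 2)‖ < 1/2) ∧
  (∀ z ∈ Gset 1, ‖(g z + 6)‖ < 1/2) ∧
  (∀ k : ℕ, 2 ≤ k → ∀ z ∈ Gset k, ‖(g z - (4*(k:ℂ)-2))‖ < 1/2) ∧
  (∀ k : ℕ, 1 ≤ k → ∀ z ∈ Bset k, ‖(g z + (4*(k:ℂ)+6))‖ < 1/2)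

/-- Condition (H). -/
def CondH (h : ℂ → ℂ) : Prop :=
  (∀ z ∈ E0, ‖(h z - 2)‖ < 1/2) ∧
  (∀ z ∈ Gset 1, ‖(h z + 10)‖ < 1/2) ∧
  (∀ z ∈ Gset 2, ‖(h z + 6)‖ < 1/2) ∧
  (∀ k : ℕ, 3 ≤ k → ∀ z ∈ Gset k, ‖(h z - (4*(k:ℂ)-6))‖ < 1/2) ∧
  (∀ k : ℕ, 1 ≤ k → ∀ z ∈ Bset k, ‖(h z + (4*(k:ℂ)+6))‖ < 1/2)

theorem comp_hgf (f g h : ℂ → ℂ)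
    (hf : Differentiable ℂ f) (hg : Differentiable ℂ g) (hh : Differentiable ℂ h)
    (hF : CondF f) (hG : CondG g) (hH : CondH h) :
    (∀ z ∈ E0, ‖((h ∘ g ∘ f) z - 2)‖ < 1/2) ∧
    (∀ k : ℕ, 1 ≤ k → ∀ z ∈ Gset k, ‖((h ∘ g ∘ f) z + 14)‖ < 1/2) ∧
    (∀ k : ℕ, 1 ≤ k → ∀ z ∈ Bset k, ‖((h ∘ g ∘ f) z + (4*(k:ℂ)+14))‖ < 1/2) := by
  have memE0 : ∀ w : ℂ, ‖(w - 2)‖ < 1/2 → w ∈ E0 := by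
    intro w hw
    exact Or.inl (le_of_lt (lt_trans hw (by norm_num)))
  have memB : ∀ (k : ℕ) (w : ℂ), ‖(w + (4*(k:ℂ)+2))‖ < 1/2 → w ∈ Bset k := by
    intro k w hw
    exact Or.inl (Or.inl (le_of_lt (lt_trans hw (by norm_num))))
  obtain ⟨hF1, hF2, hF3⟩ := hF
  obtain ⟨hG1, hG2, hG3, hG4⟩ := hG
  obtain ⟨hH1, hH2, hH3, hH4, hH5⟩ := hH
  refine ⟨?_, ?_, ?_⟩
  · intro z hz
    exact hH1 _ (memE0 _ (hG1 _ (memE0 _ (hF1 z hz))))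
  · intro k hk z hz
    have h1 : f z ∈ Bset 1 := by
      have := hF2 k hk z hz
      apply memB 1
      convert this using 3
      push_cast; ring
    have h2 : g (f z) ∈ Bset 2 := by
      have := hG4 1 le_rfl _ h1
      apply memB 2
      convert this using 3
      push_cast; ring
    have := hH5 2 (by norm_num) _ h2
    convert this using 3
    all_goals (push_cast [Function.comp_apply] <;> ring)
  · intro k hk z hz
    have h1 : f z ∈ Bset (k+1) := by
      have := hF3 k hk z hz
      apply memB (k+1)
      convert this using 3
      push_cast; ring
    have h2 : g (f z) ∈ Bset (k+2) := by
      have := hG4 (k+1) (by omega) _ h1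
      apply memB (k+2)
      convert this using 3
      push_cast; ring
    have := hH5 (k+2) (by omega) _ h2
    convert this using 3
    all_goals (push_cast [Function.comp_apply] <;> ring)
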